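/- arXiv:cond-mat/0312363 — 2 statements merged into one kernel-verified Lean document; each statement's English description precedes it below -/
import Mathlib

section
/- The map sending a pair of recurrent configurations constant on two given disjoint clusters C_1, C_2 (with values a_1, a_2) to the configuration equal to max{a_1,a_2} on C_1 ∪ C_2 and unchanged elsewhere maps burnable configurations to burnable configurations, and it is at most seven-to-one. Consequently k(n,4;σ with edge e closed) ≤ 7 · k(n,4;σ with edge e open), where k counts recurrent configurations constant on the clusters of the bond configuration σ and equal to 4 on the cluster of the boundary. -/
open scoped Classical

/-- Lattice sites of `ℤ²`. -/
abbrev Site := ℤ × ℤ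

/-- Nearest-neighbor adjacency on `ℤ²`. -/
def adjacent (x y : Site) : Prop :=
  (x.1 - y.1).natAbs + (x.2 - y.2).natAbs = 1

instance (x y : Site) : Decidable (adjacent x y) :=
  inferInstanceAs (Decidable (_ = 1))

/-- The four nearest neighbors of a site. -/
def nbhd (x : Site) : Finset Site :=
  {(x.1 + 1, x.2), (x.1 - 1, x.2), (x.1, x.2 + 1), (x.1, x.2 - 1)}

/-- Number of neighbors of `x` inside `A`. -/
def nbrs (A : Finset Site) (x : Site) : ℕ :=
  (A.filter fun y => adjacent x y).card

/-- One step of the burning algorithm: remove every site whose height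
exceeds its number of remaining neighbors. -/
def burnStep (η : Site → ℕ) (A : Finset Site) : Finset Site :=
  A.filter fun x => η x ≤ nbrs A x

/-- A configuration is burnable (recurrent) on `V` iff iterating the burning
step starting from `V` eventually removes all sites. -/
def Burnable (V : Finset Site) (η : Site → ℕ) : Prop :=
  ∃ k, (burnStep η)^[k] V = ∅

/-- The square `[-n,n]² ∩ ℤ²`. -/
noncomputable def box (n : ℕ) : Finset Site :=
  Finset.Icc (-(n : ℤ)) n ×ˢ Finset.Icc (-(n : ℤ)) n

/-- Exterior nearest-neighbor boundary of `V`. -/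
def extBoundary (V : Finset Site) : Finset Site :=
  (V.biUnion nbhd) \ V

/-- `V ∪ ∂V`. -/
def closureV (V : Finset Site) : Finset Site := V ∪ extBoundary V

/-- `x` and `y` are connected by a nearest-neighbor path inside `S`. -/
def ConnIn (S : Set Site) (x y : Site) : Prop :=
  Relation.ReflTransGen (fun u v => adjacent u v ∧ u ∈ S ∧ v ∈ S) x y

/-- A finite subset of `ℤ²` is simply connected: it is connected and its
complement is connected. -/
def SimplyConnected (V : Finset Site) : Prop :=
  (∀ x ∈ V, ∀ y ∈ V, ConnIn (↑V) x y) ∧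
  (∀ x y : Site, x ∉ V → y ∉ V → ConnIn {z | z ∉ V} x y)

/-- Height configurations on `box n`: value `v : Fin 4` encodes height `v+1`. -/
abbrev Cfg (n : ℕ) := {x : Site // x ∈ box n} → Fin 4

/-- Extension of a configuration on `box n` to all of `ℤ²`, with boundary
height `a` outside the box. -/
noncomputable def extCfg (n : ℕ) (a : ℕ) (η : Cfg n) : Site → ℕ :=
  fun x => if h : x ∈ box n then (η ⟨x, h⟩ : ℕ) + 1 else a

/-- Number of configurations on `box n` satisfying `P` (counting measure). -/
noncomputable def cnt (n : ℕ) (P : Cfg n → Prop) : ℕ :=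
  (Finset.univ.filter P).card

/-- Canonically oriented nearest-neighbor edge (pointing right or up). -/
def canonEdge (e : Site × Site) : Prop :=
  e.2 = (e.1.1 + 1, e.1.2) ∨ e.2 = (e.1.1, e.1.2 + 1)

instance (e : Site × Site) : Decidable (canonEdge e) :=
  inferInstanceAs (Decidable (_ ∨ _))

/-- The edge set `B`: nearest-neighbor bonds with at least one endpoint in
`box n` (endpoints in `box n ∪ ∂(box n)`). -/
noncomputable def bonds (n : ℕ) : Finset (Site × Site) :=
  ((closureV (box n)) ×ˢ (closureV (box n))).filter
    fun e => canonEdge e ∧ (e.1 ∈ box n ∨ e.2 ∈ box n)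

/-- Bond configurations on the edge set `B`. -/
abbrev BondCfg (n : ℕ) := {e : Site × Site // e ∈ bonds n} → Bool

/-- One step of connectivity: an open bond, or the wiring of the boundary
(all boundary sites belong to one cluster). -/
def wiredAdj (n : ℕ) (σ : BondCfg n) (x y : Site) : Prop :=
  (∃ h : (x, y) ∈ bonds n, σ ⟨(x, y), h⟩ = true) ∨
  (∃ h : (y, x) ∈ bonds n, σ ⟨(y, x), h⟩ = true) ∨
  (x ∈ extBoundary (box n) ∧ y ∈ extBoundary (box n))

/-- `x` and `y` lie in the same cluster of `σ` (boundary wired). -/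
def wiredConn (n : ℕ) (σ : BondCfg n) (x y : Site) : Prop :=
  Relation.ReflTransGen (wiredAdj n σ) x y

/-- `η` (with boundary height `a`) is constant on the clusters of `σ`. -/
def ConstOnClusters (n : ℕ) (a : ℕ) (σ : BondCfg n) (η : Cfg n) : Prop :=
  ∀ x y, wiredConn n σ x y → extCfg n a η x = extCfg n a η y

/-- `k(n,a;σ)`: the number of recurrent configurations constant on the
clusters of `σ` and equal to `a` on the cluster of the boundary. -/
noncomputable def kcount (n : ℕ) (a : ℕ) (σ : BondCfg n) : ℕ :=
  (Finset.univ.filter fun η : Cfg n =>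
    Burnable (box n) (extCfg n a η) ∧ ConstOnClusters n a σ η).card


section Aux

open scoped Classical

lemma nbrs_mono {A B : Finset Site} (h : A ⊆ B) (x : Site) : nbrs A x ≤ nbrs B x :=
  Finset.card_le_card (Finset.filter_subset_filter _ h)

lemma burnStep_mono {η : Site → ℕ} {A B : Finset Site} (h : A ⊆ B) :
    burnStep η A ⊆ burnStep η B := by
  intro x hx
  simp only [burnStep, Finset.mem_filter] at *
  exact ⟨h hx.1, hx.2.trans (nbrs_mono h x)⟩

lemma burnStep_anti {η η' : Site → ℕ} (h : ∀ x, η x ≤ η' x) (A : Finset Site) :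
    burnStep η' A ⊆ burnStep η A := by
  intro x hx
  simp only [burnStep, Finset.mem_filter] at *
  exact ⟨hx.1, (h x).trans hx.2⟩

lemma burnable_mono {V : Finset Site} {η η' : Site → ℕ} (h : ∀ x, η x ≤ η' x) :
    Burnable V η → Burnable V η' := by
  rintro ⟨k, hk⟩
  refine ⟨k, Finset.subset_empty.mp ?_⟩
  rw [← hk]
  clear hk
  induction k with
  | zero => exact Finset.Subset.refl _
  | succ k ih =>
    rw [Function.iterate_succ_apply', Function.iterate_succ_apply']
    exact (burnStep_anti h _).trans (burnStep_mono ih)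

lemma fin4_val_max (a b : Fin 4) : ((max a b : Fin 4) : ℕ) = max (a : ℕ) (b : ℕ) := by
  rcases le_total a b with h | h
  · rw [max_eq_right h, max_eq_right (Fin.le_def.mp h)]
  · rw [max_eq_left h, max_eq_left (Fin.le_def.mp h)]

/-- Height values, extended by `3` (i.e. height `4`) outside the box. -/
noncomputable def valAt (n : ℕ) (η : Cfg n) (z : Site) : Fin 4 :=
  if h : z ∈ box n then η ⟨z, h⟩ else 3

lemma extCfg_valAt (n : ℕ) (η : Cfg n) (z : Site) :
    extCfg n 4 η z = (valAt n η z : ℕ) + 1 := by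
  unfold extCfg valAt
  split
  · rfl
  · decide

lemma extCfg_box (n : ℕ) (η : Cfg n) {z : Site} (hz : z ∈ box n) :
    extCfg n 4 η z = (η ⟨z, hz⟩ : ℕ) + 1 := dif_pos hz

lemma extCfg_coe (n : ℕ) (η : Cfg n) (x : {x : Site // x ∈ box n}) :
    extCfg n 4 η ↑x = (η x : ℕ) + 1 := dif_pos x.2

lemma extCfg_out (n : ℕ) (η : Cfg n) {z : Site} (hz : z ∉ box n) :
    extCfg n 4 η z = 4 := dif_neg hz

lemma extCfg_le4 (n : ℕ) (η : Cfg n) (z : Site) : extCfg n 4 η z ≤ 4 := by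
  rw [extCfg_valAt]
  have := (valAt n η z).is_le
  omega

lemma seven_bound {α : Type*} (s : Finset α) (c : Fin 4) (f : α → Fin 4 × Fin 4)
    (hinj : Set.InjOn f ↑s) (hmax : ∀ a ∈ s, max (f a).1 (f a).2 = c) : s.card ≤ 7 := by
  have h1 : s.card ≤ (Finset.univ.filter fun p : Fin 4 × Fin 4 => max p.1 p.2 = c).card :=
    Finset.card_le_card_of_injOn f (fun a ha => by
      simp only [Finset.mem_coe, Finset.mem_filter, Finset.mem_univ, true_and]
      exact hmax a ha) hinj
  have h2 : ∀ c : Fin 4,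
      (Finset.univ.filter fun p : Fin 4 × Fin 4 => max p.1 p.2 = c).card ≤ 7 := by decide
  exact h1.trans (h2 c)

end Aux

/-- The merging map on two clusters: replace the (constant) values on
`C₁ ∪ C₂` by the maximum of the two cluster values; it preserves burnability,
is at most seven-to-one, and therefore
`k(n,4;σ with e closed) ≤ 7 k(n,4;σ with e open)`. -/
theorem merging_map_seven_to_one
    (n : ℕ) (C₁ C₂ : Finset Site) (hdis : Disjoint C₁ C₂)
    (hC₁ : C₁ ⊆ box n) (hC₂ : C₂ ⊆ box n)
    (c₁ c₂ : Site) (hc₁ : c₁ ∈ C₁) (hc₂ : c₂ ∈ C₂) :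
    -- the map sends burnable configurations to burnable configurations
    (∀ η : Site → ℕ,
      (∀ x ∈ C₁, η x = η c₁) → (∀ x ∈ C₂, η x = η c₂) →
      Burnable (box n) η →
      Burnable (box n)
        (fun x => if x ∈ C₁ ∪ C₂ then max (η c₁) (η c₂) else η x)) ∧
    -- the map is at most seven-to-one
    (∀ ξ : Cfg n,
      (Finset.univ.filter fun η : Cfg n =>
        (∀ x ∈ C₁, extCfg n 4 η x = extCfg n 4 η c₁) ∧
        (∀ x ∈ C₂, extCfg n 4 η x = extCfg n 4 η c₂) ∧
        (∀ x : Site, extCfg n 4 ξ x =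
          if x ∈ C₁ ∪ C₂ then max (extCfg n 4 η c₁) (extCfg n 4 η c₂)
          else extCfg n 4 η x)).card ≤ 7) ∧
    -- consequence for the cluster counts
    (∀ (σ : BondCfg n) (e : {e : Site × Site // e ∈ bonds n}),
      kcount n 4 (Function.update σ e false) ≤
        7 * kcount n 4 (Function.update σ e true)) := by
  refine ⟨?_, ?_, ?_⟩
  · -- burnability is preserved
    intro η h1 h2 hb
    refine burnable_mono (fun x => ?_) hb
    by_cases hx : x ∈ C₁ ∪ C₂
    · rw [if_pos hx]
      rcases Finset.mem_union.mp hx with h | h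
      · rw [h1 x h]; exact le_max_left _ _
      · rw [h2 x h]; exact le_max_right _ _
    · rw [if_neg hx]
  · -- the map is at most seven-to-one
    intro ξ
    refine seven_bound _ (ξ ⟨c₁, hC₁ hc₁⟩)
      (fun η => (η ⟨c₁, hC₁ hc₁⟩, η ⟨c₂, hC₂ hc₂⟩)) ?_ ?_
    · -- injectivity on the fiber
      intro η hη η' hη' hp
      rw [Finset.mem_coe, Finset.mem_filter] at hη hη'
      obtain ⟨-, hA1, hA2, hA3⟩ := hη
      obtain ⟨-, hB1, hB2, hB3⟩ := hη'
      have hp1 : η ⟨c₁, hC₁ hc₁⟩ = η' ⟨c₁, hC₁ hc₁⟩ := congrArg Prod.fst hp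
      have hp2 : η ⟨c₂, hC₂ hc₂⟩ = η' ⟨c₂, hC₂ hc₂⟩ := congrArg Prod.snd hp
      funext x
      by_cases hx1 : ↑x ∈ C₁
      · have e1 := hA1 ↑x hx1
        have e2 := hB1 ↑x hx1
        rw [extCfg_coe n η x, extCfg_box n η (hC₁ hc₁)] at e1
        rw [extCfg_coe n η' x, extCfg_box n η' (hC₁ hc₁)] at e2
        refine Fin.val_injective ?_
        rw [hp1] at e1
        omega
      by_cases hx2 : ↑x ∈ C₂
      · have e1 := hA2 ↑x hx2
        have e2 := hB2 ↑x hx2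
        rw [extCfg_coe n η x, extCfg_box n η (hC₂ hc₂)] at e1
        rw [extCfg_coe n η' x, extCfg_box n η' (hC₂ hc₂)] at e2
        refine Fin.val_injective ?_
        rw [hp2] at e1
        omega
      · have hx : ↑x ∉ C₁ ∪ C₂ := by
          simp only [Finset.mem_union]; tauto
        have e1 := hA3 ↑x
        have e2 := hB3 ↑x
        rw [if_neg hx] at e1 e2
        rw [extCfg_coe n ξ x, extCfg_coe n η x] at e1
        rw [extCfg_coe n ξ x, extCfg_coe n η' x] at e2
        refine Fin.val_injective ?_
        omega
    · -- the max condition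
      intro η hη
      dsimp only
      rw [Finset.mem_filter] at hη
      obtain ⟨-, hA1, hA2, hA3⟩ := hη
      have e := hA3 c₁
      rw [if_pos (Finset.mem_union_left _ hc₁)] at e
      rw [extCfg_box n ξ (hC₁ hc₁), extCfg_box n η (hC₁ hc₁),
        extCfg_box n η (hC₂ hc₂)] at e
      refine Fin.val_injective ?_
      rw [fin4_val_max]
      omega
  · -- consequence for cluster counts
    intro σ e
    set σ₀ := Function.update σ e false with hσ₀def
    set σ₁ := Function.update σ e true with hσ₁def
    have huv : e.val.1 ∈ box n ∨ e.val.2 ∈ box n := by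
      have h := e.property
      simp only [bonds, Finset.mem_filter] at h
      exact h.2.2
    set F : Cfg n → Cfg n := fun η x =>
      if wiredConn n σ₀ e.val.1 ↑x ∨ wiredConn n σ₀ e.val.2 ↑x then
        max (valAt n η e.val.1) (valAt n η e.val.2)
      else η x with hFdef
    have adjsymm : ∀ x y : Site, wiredAdj n σ₀ x y → wiredAdj n σ₀ y x := by
      intro x y h
      rcases h with ⟨h, hb⟩ | ⟨h, hb⟩ | ⟨h1, h2⟩
      · exact Or.inr (Or.inl ⟨h, hb⟩)
      · exact Or.inl ⟨h, hb⟩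
      · exact Or.inr (Or.inr ⟨h2, h1⟩)
    have connsymm : ∀ x y : Site, wiredConn n σ₀ x y → wiredConn n σ₀ y x :=
      fun x y h => by
        haveI : Std.Symm (wiredAdj n σ₀) := ⟨fun a b hab => adjsymm a b hab⟩
        exact Relation.ReflTransGen.symmetric.symm x y h
    have condiff : ∀ x y : Site, wiredAdj n σ₀ x y →
        ((wiredConn n σ₀ e.val.1 x ∨ wiredConn n σ₀ e.val.2 x) ↔
         (wiredConn n σ₀ e.val.1 y ∨ wiredConn n σ₀ e.val.2 y)) := by
      intro x y h
      constructor
      · rintro (hx | hx)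
        · exact Or.inl (Relation.ReflTransGen.tail hx h)
        · exact Or.inr (Relation.ReflTransGen.tail hx h)
      · rintro (hy | hy)
        · exact Or.inl (Relation.ReflTransGen.tail hy (adjsymm x y h))
        · exact Or.inr (Relation.ReflTransGen.tail hy (adjsymm x y h))
    have hg : ∀ η : Cfg n, ConstOnClusters n 4 σ₀ η → ∀ z : Site,
        extCfg n 4 (F η) z =
          if wiredConn n σ₀ e.val.1 z ∨ wiredConn n σ₀ e.val.2 z then
            max (extCfg n 4 η e.val.1) (extCfg n 4 η e.val.2)
          else extCfg n 4 η z := by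
      intro η hc z
      by_cases hz : z ∈ box n
      · rw [extCfg_box n (F η) hz]
        by_cases hcz : wiredConn n σ₀ e.val.1 z ∨ wiredConn n σ₀ e.val.2 z
        · rw [if_pos hcz]
          have hFz : F η ⟨z, hz⟩ = max (valAt n η e.val.1) (valAt n η e.val.2) := by
            rw [hFdef]; exact if_pos hcz
          rw [hFz, fin4_val_max, extCfg_valAt n η e.val.1, extCfg_valAt n η e.val.2]
          omega
        · rw [if_neg hcz]
          have hFz : F η ⟨z, hz⟩ = η ⟨z, hz⟩ := by
            rw [hFdef]; exact if_neg hcz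
          rw [hFz, extCfg_box n η hz]
      · rw [extCfg_out n (F η) hz]
        by_cases hcz : wiredConn n σ₀ e.val.1 z ∨ wiredConn n σ₀ e.val.2 z
        · rw [if_pos hcz]
          have h4 : extCfg n 4 η z = 4 := extCfg_out n η hz
          rcases hcz with h | h
          · have h1 : extCfg n 4 η e.val.1 = 4 := (hc e.val.1 z h).trans h4
            have h2 := extCfg_le4 n η e.val.2
            omega
          · have h1 : extCfg n 4 η e.val.2 = 4 := (hc e.val.2 z h).trans h4
            have h2 := extCfg_le4 n η e.val.1
            omega
        · rw [if_neg hcz, extCfg_out n η hz]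
    have hmain : ∀ η : Cfg n,
        Burnable (box n) (extCfg n 4 η) ∧ ConstOnClusters n 4 σ₀ η →
        Burnable (box n) (extCfg n 4 (F η)) ∧ ConstOnClusters n 4 σ₁ (F η) := by
      rintro η ⟨hb, hc⟩
      have hstep0 : ∀ x y : Site, wiredAdj n σ₀ x y →
          extCfg n 4 (F η) x = extCfg n 4 (F η) y := by
        intro x y h
        rw [hg η hc x, hg η hc y]
        by_cases hx : wiredConn n σ₀ e.val.1 x ∨ wiredConn n σ₀ e.val.2 x
        · rw [if_pos hx, if_pos ((condiff x y h).mp hx)]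
        · rw [if_neg hx, if_neg (fun hy => hx ((condiff x y h).mpr hy)),
            hc x y (Relation.ReflTransGen.single h)]
      constructor
      · refine burnable_mono (fun z => ?_) hb
        rw [hg η hc z]
        by_cases hcz : wiredConn n σ₀ e.val.1 z ∨ wiredConn n σ₀ e.val.2 z
        · rw [if_pos hcz]
          rcases hcz with h | h
          · rw [← hc e.val.1 z h]; exact le_max_left _ _
          · rw [← hc e.val.2 z h]; exact le_max_right _ _
        · rw [if_neg hcz]
      · have hstep1 : ∀ x y : Site, wiredAdj n σ₁ x y →
            extCfg n 4 (F η) x = extCfg n 4 (F η) y := by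
          intro x y h
          rcases h with ⟨hmem, hbt⟩ | ⟨hmem, hbt⟩ | hbd
          · by_cases heq : (⟨(x, y), hmem⟩ : {e : Site × Site // e ∈ bonds n}) = e
            · have h1 : e.val.1 = x := by rw [← heq]
              have h2 : e.val.2 = y := by rw [← heq]
              rw [hg η hc x, hg η hc y,
                if_pos (Or.inl (show wiredConn n σ₀ e.val.1 x by
                  rw [h1]; exact Relation.ReflTransGen.refl)),
                if_pos (Or.inr (show wiredConn n σ₀ e.val.2 y by
                  rw [h2]; exact Relation.ReflTransGen.refl))]
            · have hσval : σ₀ ⟨(x, y), hmem⟩ = true := by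
                rw [hσ₁def, Function.update_of_ne heq] at hbt
                rw [hσ₀def, Function.update_of_ne heq]
                exact hbt
              exact hstep0 x y (Or.inl ⟨hmem, hσval⟩)
          · by_cases heq : (⟨(y, x), hmem⟩ : {e : Site × Site // e ∈ bonds n}) = e
            · have h1 : e.val.1 = y := by rw [← heq]
              have h2 : e.val.2 = x := by rw [← heq]
              rw [hg η hc x, hg η hc y,
                if_pos (Or.inr (show wiredConn n σ₀ e.val.2 x by
                  rw [h2]; exact Relation.ReflTransGen.refl)),
                if_pos (Or.inl (show wiredConn n σ₀ e.val.1 y by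
                  rw [h1]; exact Relation.ReflTransGen.refl))]
            · have hσval : σ₀ ⟨(y, x), hmem⟩ = true := by
                rw [hσ₁def, Function.update_of_ne heq] at hbt
                rw [hσ₀def, Function.update_of_ne heq]
                exact hbt
              exact hstep0 x y (Or.inr (Or.inl ⟨hmem, hσval⟩))
          · exact hstep0 x y (Or.inr (Or.inr hbd))
        intro x y h
        have h' : Relation.ReflTransGen (wiredAdj n σ₁) x y := h
        clear h
        induction h' with
        | refl => rfl
        | tail hxy hstep ih => exact ih.trans (hstep1 _ _ hstep)
    unfold kcount
    refine le_trans (Finset.card_le_mul_card_image (f := F) _ 7 ?_) ?_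
    · -- fibers have at most 7 elements
      intro ξ hξ
      rcases huv with hu | hv
      · refine seven_bound _ (ξ ⟨e.val.1, hu⟩)
          (fun η => (valAt n η e.val.1, valAt n η e.val.2)) ?_ ?_
        · intro η hη η' hη' hp
          rw [Finset.mem_coe, Finset.mem_filter] at hη hη'
          obtain ⟨hη0, hηξ⟩ := hη
          obtain ⟨hη'0, hη'ξ⟩ := hη'
          rw [Finset.mem_filter] at hη0 hη'0
          have hc := hη0.2.2
          have hc' := hη'0.2.2
          have hp1 : valAt n η e.val.1 = valAt n η' e.val.1 := congrArg Prod.fst hp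
          have hp2 : valAt n η e.val.2 = valAt n η' e.val.2 := congrArg Prod.snd hp
          funext x
          by_cases hx : wiredConn n σ₀ e.val.1 ↑x ∨ wiredConn n σ₀ e.val.2 ↑x
          · rcases hx with h | h
            · have d1 := hc e.val.1 ↑x h
              have d2 := hc' e.val.1 ↑x h
              rw [extCfg_valAt n η e.val.1, extCfg_coe n η x] at d1
              rw [extCfg_valAt n η' e.val.1, extCfg_coe n η' x] at d2
              rw [hp1] at d1
              refine Fin.val_injective ?_
              omega
            · have d1 := hc e.val.2 ↑x h
              have d2 := hc' e.val.2 ↑x h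
              rw [extCfg_valAt n η e.val.2, extCfg_coe n η x] at d1
              rw [extCfg_valAt n η' e.val.2, extCfg_coe n η' x] at d2
              rw [hp2] at d1
              refine Fin.val_injective ?_
              omega
          · have r1 : F η x = η x := by rw [hFdef]; exact if_neg hx
            have r2 : F η' x = η' x := by rw [hFdef]; exact if_neg hx
            rw [← r1, ← r2, hηξ, hη'ξ]
        · intro η hη
          rw [Finset.mem_filter] at hη
          obtain ⟨hη0, hηξ⟩ := hη
          dsimp only
          have hFz : F η ⟨e.val.1, hu⟩ = max (valAt n η e.val.1) (valAt n η e.val.2) := by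
            rw [hFdef]
            exact if_pos (Or.inl Relation.ReflTransGen.refl)
          rw [← hηξ, hFz]
      · refine seven_bound _ (ξ ⟨e.val.2, hv⟩)
          (fun η => (valAt n η e.val.1, valAt n η e.val.2)) ?_ ?_
        · intro η hη η' hη' hp
          rw [Finset.mem_coe, Finset.mem_filter] at hη hη'
          obtain ⟨hη0, hηξ⟩ := hη
          obtain ⟨hη'0, hη'ξ⟩ := hη'
          rw [Finset.mem_filter] at hη0 hη'0
          have hc := hη0.2.2
          have hc' := hη'0.2.2
          have hp1 : valAt n η e.val.1 = valAt n η' e.val.1 := congrArg Prod.fst hp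
          have hp2 : valAt n η e.val.2 = valAt n η' e.val.2 := congrArg Prod.snd hp
          funext x
          by_cases hx : wiredConn n σ₀ e.val.1 ↑x ∨ wiredConn n σ₀ e.val.2 ↑x
          · rcases hx with h | h
            · have d1 := hc e.val.1 ↑x h
              have d2 := hc' e.val.1 ↑x h
              rw [extCfg_valAt n η e.val.1, extCfg_coe n η x] at d1
              rw [extCfg_valAt n η' e.val.1, extCfg_coe n η' x] at d2
              rw [hp1] at d1
              refine Fin.val_injective ?_
              omega
            · have d1 := hc e.val.2 ↑x h
              have d2 := hc' e.val.2 ↑x h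
              rw [extCfg_valAt n η e.val.2, extCfg_coe n η x] at d1
              rw [extCfg_valAt n η' e.val.2, extCfg_coe n η' x] at d2
              rw [hp2] at d1
              refine Fin.val_injective ?_
              omega
          · have r1 : F η x = η x := by rw [hFdef]; exact if_neg hx
            have r2 : F η' x = η' x := by rw [hFdef]; exact if_neg hx
            rw [← r1, ← r2, hηξ, hη'ξ]
        · intro η hη
          rw [Finset.mem_filter] at hη
          obtain ⟨hη0, hηξ⟩ := hη
          dsimp only
          have hFz : F η ⟨e.val.2, hv⟩ = max (valAt n η e.val.1) (valAt n η e.val.2) := by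
            rw [hFdef]
            exact if_pos (Or.inr Relation.ReflTransGen.refl)
          rw [← hηξ, hFz]
    · -- the image lands in the count for the opened edge
      refine Nat.mul_le_mul_left 7 (Finset.card_le_card ?_)
      intro ξ hξ
      rcases Finset.mem_image.mp hξ with ⟨η, hη, rfl⟩
      rw [Finset.mem_filter] at hη ⊢
      exact ⟨Finset.mem_univ _, hmain η hη.2⟩
end

section
/- The 5-site pattern consisting of heights 2 at positions (0,0),(1,0),(0,1),(0,2),(1,2) with a 4 at (1,1), embedded in a sea of 2-value pattern's complement filled with 4's, is burnable; replacing the central 4 by 3 and the surrounding sea by 3's yields a non-burnable configuration. -/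
open scoped Classical

/-! ### Auxiliary lemmas -/

lemma adjacent_iff_mem_nbhd (x y : Site) : adjacent x y ↔ y ∈ nbhd x := by
  obtain ⟨a, b⟩ := x; obtain ⟨c, d⟩ := y
  simp only [adjacent, nbhd, Finset.mem_insert, Finset.mem_singleton, Prod.mk.injEq]
  omega

lemma nbrs_eq_card_inter (A : Finset Site) (x : Site) :
    nbrs A x = (A ∩ nbhd x).card := by
  unfold nbrs
  congr 1
  ext y
  simp [adjacent_iff_mem_nbhd, Finset.mem_inter]

lemma card_nbhd (x : Site) : (nbhd x).card = 4 := by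
  obtain ⟨a, b⟩ := x
  rw [nbhd, Finset.card_insert_of_notMem (by simp [Prod.ext_iff] <;> omega),
    Finset.card_insert_of_notMem (by simp [Prod.ext_iff] <;> omega),
    Finset.card_insert_of_notMem (by simp [Prod.ext_iff] <;> omega),
    Finset.card_singleton]

lemma nbrs_of_nbhd_subset {A : Finset Site} {x : Site} (h : nbhd x ⊆ A) :
    nbrs A x = 4 := by
  rw [nbrs_eq_card_inter, Finset.inter_eq_right.mpr h, card_nbhd]

lemma nbrs_le_three {A : Finset Site} {x y : Site} (hy : y ∈ nbhd x) (hyA : y ∉ A) :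
    nbrs A x ≤ 3 := by
  rw [nbrs_eq_card_inter]
  have hsub : A ∩ nbhd x ⊆ (nbhd x).erase y := by
    intro z hz
    rw [Finset.mem_inter] at hz
    exact Finset.mem_erase.mpr ⟨fun h => hyA (h ▸ hz.1), hz.2⟩
  calc (A ∩ nbhd x).card ≤ ((nbhd x).erase y).card := Finset.card_le_card hsub
    _ = 3 := by rw [Finset.card_erase_of_mem hy, card_nbhd]

lemma mem_box {m : ℕ} {x : Site} :
    x ∈ box m ↔ -(m : ℤ) ≤ x.1 ∧ x.1 ≤ m ∧ -(m : ℤ) ≤ x.2 ∧ x.2 ≤ m := by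
  obtain ⟨a, b⟩ := x
  simp [box, Finset.mem_Icc, and_assoc]

/-- The burnable configuration: pattern of `2`'s in a sea of `4`'s. -/
def eta4 : Site → ℕ := fun x => if x = (0, 0) ∨ x = (1, 0) ∨ x = (0, 1) ∨
          x = (0, 2) ∨ x = (1, 2) then 2 else 4

lemma eta4_le_four (x : Site) : eta4 x ≤ 4 := by
  unfold eta4; split <;> omega

lemma peel (m : ℕ) (hm : 2 ≤ m) :
    burnStep eta4 (box (m + 1)) = box m := by
  ext x
  obtain ⟨a, b⟩ := x
  simp only [burnStep, Finset.mem_filter, mem_box]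
  constructor
  · rintro ⟨⟨h1, h2, h3, h4⟩, hle⟩
    push_cast at *
    by_contra hne
    have hbig : a = -(m + 1 : ℤ) ∨ a = (m + 1 : ℤ) ∨ b = -(m + 1 : ℤ) ∨ b = (m + 1 : ℤ) := by
      omega
    have heta : eta4 (a, b) = 4 := by
      unfold eta4
      rw [if_neg]
      push_neg
      refine ⟨?_, ?_, ?_, ?_, ?_⟩ <;> (simp only [ne_eq, Prod.mk.injEq, not_and]; omega)
    have hle3 : nbrs (box (m + 1)) (a, b) ≤ 3 := by
      rcases hbig with h | h | h | h
      · refine nbrs_le_three (y := (a - 1, b)) (by simp [nbhd]) ?_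
        rw [mem_box]; push_cast; simp; omega
      · refine nbrs_le_three (y := (a + 1, b)) (by simp [nbhd]) ?_
        rw [mem_box]; push_cast; simp; omega
      · refine nbrs_le_three (y := (a, b - 1)) (by simp [nbhd]) ?_
        rw [mem_box]; push_cast; simp; omega
      · refine nbrs_le_three (y := (a, b + 1)) (by simp [nbhd]) ?_
        rw [mem_box]; push_cast; simp; omega
    omega
  · rintro ⟨h1, h2, h3, h4⟩
    have hsub : nbhd (a, b) ⊆ box (m + 1) := by
      intro z hz
      simp only [nbhd, Finset.mem_insert, Finset.mem_singleton] at hz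
      rw [mem_box]
      push_cast
      rcases hz with h | h | h | h <;> subst h <;> refine ⟨?_, ?_, ?_, ?_⟩ <;> dsimp only <;> omega
    have h4' := nbrs_of_nbhd_subset hsub
    refine ⟨⟨by push_cast; omega, by push_cast; omega, by push_cast; omega,
      by push_cast; omega⟩, ?_⟩
    rw [h4']
    exact eta4_le_four _

lemma peel_iter : ∀ j : ℕ, (burnStep eta4)^[j] (box (j + 2)) = box 2
  | 0 => rfl
  | j + 1 => by
    rw [Function.iterate_succ_apply, show j + 1 + 2 = (j + 2) + 1 from rfl,
      peel (j + 2) (by omega), peel_iter j]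

lemma box2_burns : (burnStep eta4)^[5] (box 2) = ∅ := by decide

/-- Monotonicity core: a self-sustaining set survives any burning step. -/
lemma surviving_subset {η : Site → ℕ} {F A : Finset Site}
    (h : ∀ x ∈ F, η x ≤ nbrs F x) (hFA : F ⊆ A) : F ⊆ burnStep η A := by
  intro x hx
  refine Finset.mem_filter.mpr ⟨hFA hx, le_trans (h x hx) ?_⟩
  exact Finset.card_le_card (Finset.filter_subset_filter _ hFA)

/-- The 5-site pattern of `2`'s around a central site, with the central site
and the surrounding sea equal to `4`, is burnable; with `4` replaced by `3`
it is not burnable. -/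
theorem exceptional_island_2s (n : ℕ) (hn : 4 ≤ n) :
    Burnable (box n)
      (fun x => if x = (0, 0) ∨ x = (1, 0) ∨ x = (0, 1) ∨
          x = (0, 2) ∨ x = (1, 2) then 2 else 4) ∧
    ¬ Burnable (box n)
      (fun x => if x = (0, 0) ∨ x = (1, 0) ∨ x = (0, 1) ∨
          x = (0, 2) ∨ x = (1, 2) then 2 else 3) := by
  constructor
  · show Burnable (box n) eta4
    refine ⟨5 + (n - 2), ?_⟩
    rw [show box n = box ((n - 2) + 2) by congr 1; omega,
      Function.iterate_add_apply, peel_iter, box2_burns]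
  · set η3 : Site → ℕ := fun x => if x = (0, 0) ∨ x = (1, 0) ∨ x = (0, 1) ∨
          x = (0, 2) ∨ x = (1, 2) then 2 else 3 with hη3
    rintro ⟨k, hk⟩
    set F : Finset Site := {(0, 0), (1, 0), (0, 1), (1, 1), (0, 2), (1, 2)} with hF
    have hself : ∀ x ∈ F, η3 x ≤ nbrs F x := by decide
    have hFbox : F ⊆ box n := by
      intro x hx
      fin_cases hx <;> (rw [mem_box] ; push_cast ; simp <;> omega)
    have hsur : ∀ j : ℕ, F ⊆ (burnStep η3)^[j] (box n) := by
      intro j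
      induction j with
      | zero => exact hFbox
      | succ j ih =>
        rw [Function.iterate_succ_apply']
        exact surviving_subset hself ih
    have := hsur k
    rw [hk] at this
    have hmem : ((0 : ℤ), (0 : ℤ)) ∈ F := by decide
    exact absurd (this hmem) (Finset.notMem_empty _)
end
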